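/- arXiv:1307.5803 — 2 statements merged into one kernel-verified Lean document; each statement's English description precedes it below -/
import Mathlib

section
/- Let μ and μ_n (n ≥ 1) be elements of M_O, and for ρ ∈ M_O and r > 0 let ρ^{(r)} denote the restriction of ρ to S \ C^r, which is a finite Borel measure on the closed subspace S \ C^r. The following are equivalent: (a) μ_n → μ in M_O; (b) μ_n^{(r)} → μ^{(r)} weakly as finite Borel measures on S \ C^r for all but at most countably many r > 0; (c) there exists a sequence r_i ↓ 0 such that μ_n^{(r_i)} → μ^{(r_i)} weakly as finite Borel measures on S \ C^{r_i} for each i. -/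
open MeasureTheory Metric Filter Topology Set

noncomputable section

variable {S : Type*} [MetricSpace S] [MeasurableSpace S]

/-- `A` is bounded away from `C`: `A ⊆ S \ C^r` for some `r > 0`. -/
def BddAway (C A : Set S) : Prop := ∃ r > 0, ∀ x ∈ A, r ≤ infDist x C

/-- The class `C_O` of test functions: bounded, nonnegative, continuous on `O = S \ C`,
and vanishing on `C^r` for some `r > 0` (extended by `0` to all of `S`). -/
def IsCO (C : Set S) (f : S → ℝ) : Prop :=
  ContinuousOn f Cᶜ ∧ (∀ x, 0 ≤ f x) ∧ (∃ B : ℝ, ∀ x, f x ≤ B) ∧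
    ∃ r > 0, ∀ x, infDist x C < r → f x = 0

/-- The class `M_O`: Borel measures on `O = S \ C` (i.e. giving no mass to `C`)
that are finite on `S \ C^r` for each `r > 0`. -/
def MemMO (C : Set S) (μ : Measure S) : Prop :=
  μ C = 0 ∧ ∀ r : ℝ, 0 < r → μ {x | r ≤ infDist x C} < ⊤

/-- Convergence `μ_n → μ` in `M_O`. -/
def MOTendsto (C : Set S) (μn : ℕ → Measure S) (μ : Measure S) : Prop :=
  ∀ f : S → ℝ, IsCO C f →
    Tendsto (fun n => ∫ x, f x ∂ μn n) atTop (𝓝 (∫ x, f x ∂ μ))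

/-- Weak convergence of the restrictions of `μ_n` and `μ` to the set `A`
(viewed as finite Borel measures on the subspace `A`): `∫ g dν_n → ∫ g dν` for
every real-valued `g` that is bounded and continuous on `A`. -/
def WeakConvOn (A : Set S) (μn : ℕ → Measure S) (μ : Measure S) : Prop :=
  ∀ g : S → ℝ, ContinuousOn g A → (∃ B : ℝ, ∀ x ∈ A, |g x| ≤ B) →
    Tendsto (fun n => ∫ x in A, g x ∂ μn n) atTop (𝓝 (∫ x in A, g x ∂ μ))

section AuxLemmas

variable {C : Set S}

lemma auxClosedA (C : Set S) (r : ℝ) : IsClosed {x : S | r ≤ infDist x C} :=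
  isClosed_le continuous_const (continuous_infDist_pt C)

lemma auxContinuousOfIsCO (hC : IsClosed C) {f : S → ℝ} (hf : IsCO C f) : Continuous f := by
  obtain ⟨hcont, _, _, r, hr, h0⟩ := hf
  rw [continuous_iff_continuousAt]
  intro x
  by_cases hx : x ∈ C
  · have hopen : IsOpen {y : S | infDist y C < r} :=
      isOpen_lt (continuous_infDist_pt C) continuous_const
    have hnb : {y : S | infDist y C < r} ∈ 𝓝 x :=
      hopen.mem_nhds (by simpa [Set.mem_setOf_eq, infDist_zero_of_mem hx] using hr)
    have heq : f =ᶠ[𝓝 x] fun _ => (0:ℝ) := eventually_of_mem hnb fun y hy => h0 y hy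
    exact heq.continuousAt
  · exact hcont.continuousAt (hC.isOpen_compl.mem_nhds hx)

variable [BorelSpace S]

lemma auxMeasA (C : Set S) (r : ℝ) : MeasurableSet {x : S | r ≤ infDist x C} :=
  (auxClosedA C r).measurableSet

lemma auxIntegrable {μ : Measure S} (hμ : MemMO C μ) {f : S → ℝ} (hcont : Continuous f)
    {B : ℝ} (hB : ∀ x, |f x| ≤ B) {r : ℝ} (hr : 0 < r)
    (h0 : ∀ x, infDist x C < r → f x = 0) : Integrable f μ := by
  set A : Set S := {x | r ≤ infDist x C} with hA
  have hAmeas : MeasurableSet A := auxMeasA C r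
  have hint : IntegrableOn f A μ :=
    Measure.integrableOn_of_bounded (hμ.2 r hr).ne hcont.aestronglyMeasurable
      (ae_of_all _ fun x => by rw [Real.norm_eq_abs]; exact hB x)
  have heq : A.indicator f = f := by
    funext x
    by_cases hx : x ∈ A
    · simp [Set.indicator_of_mem hx]
    · have hxlt : infDist x C < r := lt_of_not_ge (by simpa [hA, Set.mem_setOf_eq] using hx)
      simp [Set.indicator_of_notMem hx, h0 x hxlt]
  exact heq ▸ hint.integrable_indicator hAmeas

lemma auxCutoff (C : Set S) {a b : ℝ} (hab : a < b) :
    ∃ φ : S → ℝ, Continuous φ ∧ (∀ x, 0 ≤ φ x) ∧ (∀ x, φ x ≤ 1) ∧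
      (∀ x, infDist x C ≤ a → φ x = 0) ∧ (∀ x, b ≤ infDist x C → φ x = 1) := by
  refine ⟨fun x => max 0 (min 1 ((infDist x C - a) / (b - a))), ?_, ?_, ?_, ?_, ?_⟩
  · exact continuous_const.max (continuous_const.min
      (((continuous_infDist_pt C).sub continuous_const).div_const _))
  · intro x; exact le_max_left _ _
  · intro x; exact max_le zero_le_one (min_le_left _ _)
  · intro x hx
    have h1 : (infDist x C - a) / (b - a) ≤ 0 :=
      div_nonpos_of_nonpos_of_nonneg (by linarith) (by linarith)
    have h2 : min 1 ((infDist x C - a) / (b - a)) ≤ 0 := le_trans (min_le_right _ _) h1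
    exact max_eq_left h2
  · intro x hx
    have h1 : (1:ℝ) ≤ (infDist x C - a) / (b - a) :=
      (one_le_div (by linarith)).2 (by linarith)
    dsimp only
    rw [min_eq_left h1]
    exact max_eq_right zero_le_one

lemma auxCountableBad {μ : Measure S}
    (hμfin : ∀ r : ℝ, 0 < r → μ {x | r ≤ infDist x C} < ⊤) :
    Set.Countable {r : ℝ | 0 < r ∧ μ {x | infDist x C = r} ≠ 0} := by
  have hdmeas : Measurable fun x : S => infDist x C := (continuous_infDist_pt C).measurable
  have hsub : {r : ℝ | 0 < r ∧ μ {x | infDist x C = r} ≠ 0} ⊆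
      ⋃ k : ℕ, {t : ℝ |
        0 < (μ.restrict {x | 1/((k:ℝ)+1) ≤ infDist x C}) {x | infDist x C = t}} := by
    rintro t ⟨ht, hmt⟩
    obtain ⟨k, hk⟩ := exists_nat_one_div_lt ht
    refine Set.mem_iUnion.2 ⟨k, ?_⟩
    have hsub2 : {x : S | infDist x C = t} ⊆ {x | 1/((k:ℝ)+1) ≤ infDist x C} := by
      intro x hx
      rw [Set.mem_setOf_eq] at hx ⊢
      rw [hx]; exact hk.le
    have hms : MeasurableSet {x : S | infDist x C = t} :=
      hdmeas (measurableSet_singleton t)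
    rw [Set.mem_setOf_eq, Measure.restrict_apply hms,
      Set.inter_eq_self_of_subset_left hsub2]
    exact pos_iff_ne_zero.mpr hmt
  refine Set.Countable.mono hsub (Set.countable_iUnion fun k => ?_)
  haveI : IsFiniteMeasure (μ.restrict {x | 1/((k:ℝ)+1) ≤ infDist x C}) := by
    constructor
    rw [Measure.restrict_apply_univ]
    exact hμfin _ (by positivity)
  exact Measure.countable_meas_level_set_pos hdmeas

lemma auxSeq (T : Set ℝ) (hT : T.Countable) :
    ∃ r : ℕ → ℝ, StrictAnti r ∧ (∀ i, 0 < r i) ∧ Tendsto r atTop (𝓝 0) ∧ ∀ i, r i ∉ T := by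
  have key : ∀ b : ℝ, 0 < b → ∃ x : ℝ, (0 < x ∧ x ∉ T) ∧ x < b := by
    intro b hb
    by_contra hcon
    push_neg at hcon
    have hsub : Ioo (0:ℝ) b ⊆ T := by
      intro x hx
      by_contra hxT
      exact absurd (hcon x ⟨hx.1, hxT⟩) (not_le.2 hx.2)
    have h0 : volume (Ioo (0:ℝ) b) = 0 := measure_mono_null hsub (hT.measure_zero _)
    rw [Real.volume_Ioo, sub_zero] at h0
    rw [ENNReal.ofReal_eq_zero] at h0
    linarith
  obtain ⟨x0, hx0, _⟩ := key 1 one_pos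
  have key2 : ∀ (k : ℕ) (p : {x : ℝ // 0 < x ∧ x ∉ T}), ∃ x : ℝ,
      (0 < x ∧ x ∉ T) ∧ x < p.1 ∧ x < 1/((k:ℝ)+2) := by
    intro k p
    obtain ⟨x, hx, hlt⟩ := key (min p.1 (1/((k:ℝ)+2))) (lt_min p.2.1 (by positivity))
    exact ⟨x, hx, (lt_min_iff.mp hlt).1, (lt_min_iff.mp hlt).2⟩
  choose step hstep hlt1 hlt2 using key2
  let F : ℕ → {x : ℝ // 0 < x ∧ x ∉ T} := fun n =>
    Nat.rec (motive := fun _ => {x : ℝ // 0 < x ∧ x ∉ T}) ⟨x0, hx0⟩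
      (fun k p => ⟨step k p, hstep k p⟩) n
  have hFsucc : ∀ n, F (n+1) = ⟨step n (F n), hstep n (F n)⟩ := fun n => rfl
  have hdec : ∀ n, (F (n+1)).1 < (F n).1 := fun n => by rw [hFsucc n]; exact hlt1 n (F n)
  have hsm : ∀ n, (F (n+1)).1 < 1/((n:ℝ)+2) := fun n => by rw [hFsucc n]; exact hlt2 n (F n)
  have hanti : StrictAnti fun n => (F n).1 := strictAnti_nat_of_succ_lt hdec
  refine ⟨fun n => (F n).1, hanti, fun n => (F n).2.1, ?_, fun n => (F n).2.2⟩
  rw [Metric.tendsto_atTop]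
  intro ε hε
  obtain ⟨k, hk⟩ := exists_nat_one_div_lt hε
  refine ⟨k+1, fun n hn => ?_⟩
  have h1 : (F n).1 ≤ (F (k+1)).1 := hanti.antitone hn
  have h2 : (F (k+1)).1 < 1/((k:ℝ)+2) := hsm k
  have h3 : 1/((k:ℝ)+2) ≤ 1/((k:ℝ)+1) :=
    one_div_le_one_div_of_le (by positivity) (by linarith)
  rw [Real.dist_eq, sub_zero, abs_of_pos (F n).2.1]
  linarith

end AuxLemmas

section Core

variable {C : Set S} [BorelSpace S]

lemma auxWeakConv (hC : IsClosed C)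
    {μ : Measure S} {μn : ℕ → Measure S} (hμ : MemMO C μ) (hμn : ∀ n, MemMO C (μn n))
    (h : MOTendsto C μn μ) {r : ℝ} (hr : 0 < r)
    (hr0 : μ {x | infDist x C = r} = 0) :
    WeakConvOn {x | r ≤ infDist x C} μn μ := by
  intro g hg hgB
  set d : S → ℝ := fun x => infDist x C with hd
  set A : Set S := {x | r ≤ infDist x C} with hA
  have hAclosed : IsClosed A := auxClosedA C r
  have hAmeas : MeasurableSet A := hAclosed.measurableSet
  -- Tietze extension of g to a bounded continuous G on S
  obtain ⟨B₀, hB₀⟩ := hgB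
  have hgc : Continuous (A.restrict g) := continuousOn_iff_continuous_restrict.mp hg
  set gb : BoundedContinuousFunction A ℝ :=
    BoundedContinuousFunction.mkOfBound ⟨A.restrict g, hgc⟩ (2 * max B₀ 0) (fun x y => by
      have hx := hB₀ x x.2
      have hy := hB₀ y y.2
      rw [Real.dist_eq]
      have := abs_sub (g x.1) (g y.1)
      have hBle : B₀ ≤ max B₀ 0 := le_max_left _ _
      calc |A.restrict g x - A.restrict g y| = |g x.1 - g y.1| := rfl
        _ ≤ |g x.1| + |g y.1| := abs_sub _ _
        _ ≤ 2 * max B₀ 0 := by linarith) with hgb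
  obtain ⟨G, hGnorm, hGres⟩ :=
    BoundedContinuousFunction.exists_norm_eq_restrict_eq_of_closed gb hAclosed
  have hGA : ∀ x ∈ A, G x = g x := by
    intro x hx
    have := DFunLike.congr_fun hGres (⟨x, hx⟩ : A)
    simp at this; exact this
  set K : ℝ := ‖G‖ + 1 with hK
  have hKpos : 0 < K := by positivity
  have hGbd : ∀ x, |G x| ≤ K := fun x => by
    have := G.norm_coe_le_norm x
    rw [Real.norm_eq_abs] at this
    linarith
  -- replace g by G in the goal
  have hsetg : ∀ ν : Measure S, ∫ x in A, g x ∂ν = ∫ x in A, G x ∂ν := fun ν =>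
    setIntegral_congr_fun hAmeas (fun x hx => (hGA x hx).symm)
  rw [show (fun n => ∫ x in A, g x ∂ μn n) = fun n => ∫ x in A, G x ∂ μn n from
    funext fun n => hsetg _, hsetg μ]
  rw [Metric.tendsto_nhds]
  intro ε hε
  set ε₁ : ℝ := ε / (2 * K + 2) with hε₁def
  have hε₁ : 0 < ε₁ := div_pos hε (by linarith)
  have hεeq : (2 * K + 2) * ε₁ = ε := by
    rw [hε₁def]; field_simp
  have hdmeas : Measurable d := (continuous_infDist_pt C).measurable
  -- choose δ
  have hkey : ∃ δ : ℝ, 0 < δ ∧ 2 * δ < r ∧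
      μ {x | r - 2*δ < d x ∧ d x < r + δ} < ENNReal.ofReal ε₁ := by
    set δs : ℕ → ℝ := fun k => r / (2 * ((k:ℝ) + 2)) with hδs
    have hδpos : ∀ k : ℕ, 0 < δs k := fun k => by positivity
    set E : ℕ → Set S := fun k => {x | r - 2 * δs k < d x ∧ d x < r + δs k} with hE
    have hEmeas : ∀ k, MeasurableSet (E k) := fun k =>
      (measurableSet_lt measurable_const hdmeas).inter
        (measurableSet_lt hdmeas measurable_const)
    have hδanti : ∀ ⦃k l : ℕ⦄, k ≤ l → δs l ≤ δs k := by
      intro k l hkl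
      show r / (2*((l:ℝ)+2)) ≤ r / (2*((k:ℝ)+2))
      have hkl' : (k:ℝ) ≤ (l:ℝ) := Nat.cast_le.mpr hkl
      gcongr
    have hEanti : Antitone E := by
      intro k l hkl x hx
      obtain ⟨h1, h2⟩ := hx
      exact ⟨by have := hδanti hkl; linarith, by have := hδanti hkl; linarith⟩
    have hδ0 : Tendsto δs atTop (𝓝 0) := by
      apply Tendsto.div_atTop (tendsto_const_nhds)
      apply Tendsto.const_mul_atTop two_pos
      exact tendsto_atTop_add_const_right _ 2 tendsto_natCast_atTop_atTop
    have hInter : (⋂ k, E k) ⊆ {x | d x = r} := by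
      intro x hx
      simp only [Set.mem_iInter, hE, Set.mem_setOf_eq] at hx
      have hub : Tendsto (fun k => r + δs k) atTop (𝓝 (r + 0)) :=
        tendsto_const_nhds.add hδ0
      have hlb : Tendsto (fun k => r - 2 * δs k) atTop (𝓝 (r - 2 * 0)) :=
        tendsto_const_nhds.sub (hδ0.const_mul 2)
      rw [add_zero] at hub
      have h1 : d x ≤ r := ge_of_tendsto' hub (fun k => (hx k).2.le)
      have h2 : r - 2 * 0 ≤ d x := le_of_tendsto' hlb (fun k => (hx k).1.le)
      rw [mul_zero, sub_zero] at h2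
      exact le_antisymm h1 h2
    have hfin : μ (E 0) ≠ ⊤ := by
      have hsub : E 0 ⊆ {x | r/2 ≤ infDist x C} := by
        intro x hx
        have h1 : r - 2 * δs 0 < d x := hx.1
        have : δs 0 = r / 4 := by rw [hδs]; norm_num
        rw [Set.mem_setOf_eq]
        rw [this] at h1
        show r / 2 ≤ d x
        linarith
      exact ((measure_mono hsub).trans_lt (hμ.2 _ (half_pos hr))).ne
    have htend : Tendsto (μ ∘ E) atTop (𝓝 (μ (⋂ k, E k))) :=
      tendsto_measure_iInter_atTop (fun k => (hEmeas k).nullMeasurableSet) hEanti ⟨0, hfin⟩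
    have hzero : μ (⋂ k, E k) = 0 :=
      le_antisymm (le_trans (measure_mono hInter) hr0.le) (zero_le)
    rw [hzero] at htend
    have hev : ∀ᶠ k in atTop, (μ ∘ E) k < ENNReal.ofReal ε₁ :=
      htend.eventually_lt_const (by simp [ENNReal.ofReal_pos, hε₁])
    obtain ⟨k, hk⟩ := hev.exists
    refine ⟨δs k, hδpos k, ?_, hk⟩
    have h2δ : 2 * δs k = r / ((k:ℝ) + 2) := by
      show 2 * (r / (2*((k:ℝ)+2))) = r / ((k:ℝ) + 2)
      field_simp
    rw [h2δ]
    exact div_lt_self hr (by have := Nat.cast_nonneg (α:=ℝ) k; linarith)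
  obtain ⟨δ, hδ0, hδr, hδμ⟩ := hkey
  -- cutoffs
  obtain ⟨χ, hχc, hχ0, hχ1, hχlo, hχhi⟩ := auxCutoff C (show r - δ < r by linarith)
  obtain ⟨φ₁, hφ₁c, hφ₁0, hφ₁1, hφ₁lo, hφ₁hi⟩ :=
    auxCutoff C (show r - 2*δ < r - δ by linarith)
  obtain ⟨φ₂, hφ₂c, hφ₂0, hφ₂1, hφ₂lo, hφ₂hi⟩ := auxCutoff C (show r < r + δ by linarith)
  set ψ : S → ℝ := fun x => φ₁ x * (1 - φ₂ x) with hψ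
  have hψc : Continuous ψ := hφ₁c.mul (continuous_const.sub hφ₂c)
  have hψ0 : ∀ x, 0 ≤ ψ x := fun x => mul_nonneg (hφ₁0 x) (by have := hφ₂1 x; linarith)
  have hψ1 : ∀ x, ψ x ≤ 1 := fun x => by
    have h1 := hφ₁1 x; have h2 := hφ₂0 x; have h3 := hφ₁0 x; have h4 := hφ₂1 x
    show φ₁ x * (1 - φ₂ x) ≤ 1
    nlinarith
  have hψlo : ∀ x, d x ≤ r - 2*δ → ψ x = 0 := fun x hx => by
    show φ₁ x * (1 - φ₂ x) = 0
    rw [hφ₁lo x hx, zero_mul]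
  have hψhi : ∀ x, r + δ ≤ d x → ψ x = 0 := fun x hx => by
    show φ₁ x * (1 - φ₂ x) = 0
    rw [hφ₂hi x hx]; ring
  have hψone : ∀ x, r - δ ≤ d x → d x ≤ r → ψ x = 1 := fun x h1 h2 => by
    show φ₁ x * (1 - φ₂ x) = 1
    rw [hφ₁hi x h1, hφ₂lo x h2]; ring
  have hψCO : IsCO C ψ := ⟨hψc.continuousOn, hψ0, ⟨1, hψ1⟩,
    ⟨r - 2*δ, by linarith, fun x hx => hψlo x hx.le⟩⟩
  have hψbd : ∀ x, |ψ x| ≤ 1 := fun x => abs_le.2 ⟨by linarith [hψ0 x], hψ1 x⟩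
  have hψint : ∀ ν : Measure S, MemMO C ν → Integrable ψ ν := fun ν hν =>
    auxIntegrable hν hψc hψbd (show (0:ℝ) < r - 2*δ by linarith) (fun x hx => hψlo x hx.le)
  -- sets E1 ⊆ E2
  set E1 : Set S := {x | r - δ < d x ∧ d x < r} with hE1
  set E2 : Set S := {x | r - 2*δ < d x ∧ d x < r + δ} with hE2
  have hE1meas : MeasurableSet E1 :=
    (measurableSet_lt measurable_const hdmeas).inter (measurableSet_lt hdmeas measurable_const)
  have hE2meas : MeasurableSet E2 :=
    (measurableSet_lt measurable_const hdmeas).inter (measurableSet_lt hdmeas measurable_const)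
  have hE12 : E1 ⊆ E2 := fun x hx => ⟨by linarith [hx.1], by linarith [hx.2]⟩
  have hE2fin : ∀ ν : Measure S, MemMO C ν → ν E2 < ⊤ := by
    intro ν hν
    refine lt_of_le_of_lt (measure_mono ?_) (hν.2 (r - 2*δ) (by linarith))
    exact fun x hx => hx.1.le
  have hE1fin : ∀ ν : Measure S, MemMO C ν → ν E1 < ⊤ := fun ν hν =>
    lt_of_le_of_lt (measure_mono hE12) (hE2fin ν hν)
  have hμE2 : (μ E2).toReal < ε₁ :=
    (ENNReal.lt_ofReal_iff_toReal_lt (hE2fin μ hμ).ne).mp hδμ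
  have hψle1 : ∫ x, ψ x ∂μ ≤ (μ E2).toReal := by
    have hzero : ∀ x ∉ E2, ψ x = 0 := by
      intro x hx
      rw [hE2, Set.mem_setOf_eq, not_and_or, not_lt, not_lt] at hx
      rcases hx with hx | hx
      · exact hψlo x (by linarith)
      · exact hψhi x hx
    rw [← setIntegral_eq_integral_of_forall_compl_eq_zero hzero]
    calc ∫ x in E2, ψ x ∂μ ≤ ∫ x in E2, (1:ℝ) ∂μ :=
          setIntegral_mono_on ((hψint μ hμ).integrableOn)
            (integrableOn_const (hE2fin μ hμ).ne) hE2meas (fun x _ => hψ1 x)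
      _ = (μ E2).toReal := by simp; rfl
  have hψμ : ∫ x, ψ x ∂μ < ε₁ := lt_of_le_of_lt hψle1 hμE2
  have hev1 : ∀ᶠ n in atTop, ∫ x, ψ x ∂ μn n < ε₁ :=
    (h ψ hψCO).eventually_lt_const hψμ
  have hνE1ψ : ∀ ν : Measure S, MemMO C ν → (ν E1).toReal ≤ ∫ x, ψ x ∂ν := by
    intro ν hν
    have h1 : (ν E1).toReal = ∫ x in E1, (1:ℝ) ∂ν := by simp; rfl
    rw [h1]
    calc ∫ x in E1, (1:ℝ) ∂ν ≤ ∫ x in E1, ψ x ∂ν :=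
          setIntegral_mono_on (integrableOn_const (hE1fin ν hν).ne)
            ((hψint ν hν).integrableOn) hE1meas
            (fun x hx => (hψone x hx.1.le hx.2.le).ge)
      _ ≤ ∫ x, ψ x ∂ν := setIntegral_le_integral (hψint ν hν) (ae_of_all _ hψ0)
  -- Φ = G * χ
  set Φ : S → ℝ := fun x => G x * χ x with hΦ
  have hΦc : Continuous Φ := G.continuous.mul hχc
  have hχabs : ∀ x, |χ x| ≤ 1 := fun x => abs_le.2 ⟨by linarith [hχ0 x], hχ1 x⟩
  have hΦbd : ∀ x, |Φ x| ≤ K := fun x => by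
    show |G x * χ x| ≤ K
    rw [abs_mul]
    calc |G x| * |χ x| ≤ K * 1 :=
          mul_le_mul (hGbd x) (hχabs x) (abs_nonneg _) hKpos.le
      _ = K := mul_one K
  have hΦvan : ∀ x, infDist x C < r - δ → Φ x = 0 := fun x hx => by
    show G x * χ x = 0
    rw [hχlo x hx.le, mul_zero]
  have hΦint : ∀ ν : Measure S, MemMO C ν → Integrable Φ ν := fun ν hν =>
    auxIntegrable hν hΦc hΦbd (show (0:ℝ) < r - δ by linarith) hΦvan
  set f₁ : S → ℝ := fun x => (G x + K) * χ x with hf₁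
  set f₂ : S → ℝ := fun x => K * χ x with hf₂
  have hGK0 : ∀ x, 0 ≤ G x + K := fun x => by have := hGbd x; have := neg_abs_le (G x); linarith
  have hGK2 : ∀ x, G x + K ≤ 2*K := fun x => by
    have := hGbd x; have := le_abs_self (G x); linarith
  have hf₁CO : IsCO C f₁ := by
    refine ⟨((G.continuous.add continuous_const).mul hχc).continuousOn, ?_, ⟨2*K, ?_⟩,
      ⟨r - δ, by linarith, ?_⟩⟩
    · intro x; exact mul_nonneg (hGK0 x) (hχ0 x)
    · intro x
      calc (G x + K) * χ x ≤ (G x + K) * 1 := mul_le_mul_of_nonneg_left (hχ1 x) (hGK0 x)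
        _ = G x + K := mul_one _
        _ ≤ 2*K := hGK2 x
    · intro x hx; show (G x + K) * χ x = 0; rw [hχlo x hx.le, mul_zero]
  have hf₂CO : IsCO C f₂ := by
    refine ⟨(continuous_const.mul hχc).continuousOn, ?_, ⟨K, ?_⟩, ⟨r - δ, by linarith, ?_⟩⟩
    · intro x; exact mul_nonneg hKpos.le (hχ0 x)
    · intro x
      calc K * χ x ≤ K * 1 := mul_le_mul_of_nonneg_left (hχ1 x) hKpos.le
        _ = K := mul_one K
    · intro x hx; show K * χ x = 0; rw [hχlo x hx.le, mul_zero]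
  have hf₁int : ∀ ν : Measure S, MemMO C ν → Integrable f₁ ν := by
    intro ν hν
    refine auxIntegrable hν ((G.continuous.add continuous_const).mul hχc) (B := 2*K)
      (fun x => ?_) (show (0:ℝ) < r - δ by linarith)
      (fun x hx => by show (G x + K) * χ x = 0; rw [hχlo x hx.le, mul_zero])
    show |(G x + K) * χ x| ≤ 2*K
    rw [abs_mul]
    calc |G x + K| * |χ x| ≤ (2*K) * 1 :=
          mul_le_mul (by rw [abs_of_nonneg (hGK0 x)]; exact hGK2 x) (hχabs x)
            (abs_nonneg _) (by linarith)
      _ = 2*K := mul_one _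
  have hf₂int : ∀ ν : Measure S, MemMO C ν → Integrable f₂ ν := by
    intro ν hν
    refine auxIntegrable hν (continuous_const.mul hχc) (B := K) (fun x => ?_)
      (show (0:ℝ) < r - δ by linarith)
      (fun x hx => by show K * χ x = 0; rw [hχlo x hx.le, mul_zero])
    show |K * χ x| ≤ K
    rw [abs_mul, abs_of_pos hKpos]
    calc K * |χ x| ≤ K * 1 := mul_le_mul_of_nonneg_left (hχabs x) hKpos.le
      _ = K := mul_one K
  have hΦeq : ∀ ν : Measure S, MemMO C ν →
      ∫ x, Φ x ∂ν = ∫ x, f₁ x ∂ν - ∫ x, f₂ x ∂ν := by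
    intro ν hν
    rw [← integral_sub (hf₁int ν hν) (hf₂int ν hν)]
    congr 1
    funext x
    show G x * χ x = (G x + K) * χ x - K * χ x
    ring
  have hΦtend : Tendsto (fun n => ∫ x, Φ x ∂ μn n) atTop (𝓝 (∫ x, Φ x ∂μ)) := by
    rw [show (fun n => ∫ x, Φ x ∂ μn n) = fun n => ∫ x, f₁ x ∂ μn n - ∫ x, f₂ x ∂ μn n from
      funext fun n => hΦeq _ (hμn n), hΦeq μ hμ]
    exact (h f₁ hf₁CO).sub (h f₂ hf₂CO)
  have hev2 : ∀ᶠ n in atTop, dist (∫ x, Φ x ∂ μn n) (∫ x, Φ x ∂μ) < ε₁ :=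
    Metric.tendsto_nhds.mp hΦtend ε₁ hε₁
  -- error estimate
  have hErr : ∀ ν : Measure S, MemMO C ν →
      |∫ x in A, G x ∂ν - ∫ x, Φ x ∂ν| ≤ K * (ν E1).toReal := by
    intro ν hν
    have hGint : IntegrableOn (fun x => G x) A ν :=
      Measure.integrableOn_of_bounded (hν.2 r hr).ne G.continuous.aestronglyMeasurable
        (ae_of_all _ fun x => by rw [Real.norm_eq_abs]; exact hGbd x)
    have hindint : Integrable (A.indicator fun x => G x) ν := hGint.integrable_indicator hAmeas
    set hdf : S → ℝ := fun x => Φ x - A.indicator (fun y => G y) x with hhd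
    have hdint : Integrable hdf ν := (hΦint ν hν).sub hindint
    have hzero : ∀ x ∉ E1, hdf x = 0 := by
      intro x hx
      rw [hE1, Set.mem_setOf_eq, not_and_or, not_lt, not_lt] at hx
      rcases hx with hx | hx
      · have hxA : x ∉ A := fun hmem => by
          have h1 : r ≤ d x := hmem
          linarith
        show Φ x - A.indicator (fun y => G y) x = 0
        rw [Set.indicator_of_notMem hxA]
        show G x * χ x - 0 = 0
        rw [hχlo x hx, mul_zero, sub_zero]
      · have hxA : x ∈ A := hx
        show Φ x - A.indicator (fun y => G y) x = 0
        rw [Set.indicator_of_mem hxA]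
        show G x * χ x - G x = 0
        rw [hχhi x hx, mul_one, sub_self]
    have heq1 : ∫ x, hdf x ∂ν = ∫ x, Φ x ∂ν - ∫ x in A, G x ∂ν := by
      rw [show (fun x => hdf x) = fun x => Φ x - A.indicator (fun y => G y) x from rfl]
      rw [integral_sub (hΦint ν hν) hindint, integral_indicator hAmeas]
    have heq2 : ∫ x, hdf x ∂ν = ∫ x in E1, hdf x ∂ν :=
      (setIntegral_eq_integral_of_forall_compl_eq_zero hzero).symm
    have hbd : ‖∫ x in E1, hdf x ∂ν‖ ≤ K * (ν E1).toReal := by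
      refine norm_setIntegral_le_of_norm_le_const (hE1fin ν hν) (fun x hx => ?_)
      rw [Real.norm_eq_abs]
      have hxA : x ∉ A := fun hmem => by
        have h1 : r ≤ d x := hmem
        exact absurd hx.2 (not_lt.2 h1)
      show |Φ x - A.indicator (fun y => G y) x| ≤ K
      rw [Set.indicator_of_notMem hxA, sub_zero]
      exact hΦbd x
    calc |∫ x in A, G x ∂ν - ∫ x, Φ x ∂ν| = ‖∫ x in E1, hdf x ∂ν‖ := by
          rw [Real.norm_eq_abs, ← heq2, heq1, abs_sub_comm]
      _ ≤ K * (ν E1).toReal := hbd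
  -- final assembly
  filter_upwards [hev1, hev2] with n h1 h2
  have e1 : |∫ x in A, G x ∂ μn n - ∫ x, Φ x ∂ μn n| ≤ K * ((μn n) E1).toReal := hErr _ (hμn n)
  have e1' : ((μn n) E1).toReal ≤ ∫ x, ψ x ∂ μn n := hνE1ψ _ (hμn n)
  have e3 : |∫ x in A, G x ∂μ - ∫ x, Φ x ∂μ| ≤ K * (μ E1).toReal := hErr μ hμ
  have e3' : (μ E1).toReal ≤ (μ E2).toReal :=
    ENNReal.toReal_mono (hE2fin μ hμ).ne (measure_mono hE12)
  have d1 : dist (∫ x in A, G x ∂ μn n) (∫ x, Φ x ∂ μn n) ≤ K * ∫ x, ψ x ∂ μn n := by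
    rw [Real.dist_eq]
    exact le_trans e1 (le_trans (by rfl) (mul_le_mul_of_nonneg_left e1' hKpos.le))
  have d3 : dist (∫ x, Φ x ∂μ) (∫ x in A, G x ∂μ) ≤ K * (μ E2).toReal := by
    rw [Real.dist_eq, abs_sub_comm]
    exact le_trans e3 (mul_le_mul_of_nonneg_left e3' hKpos.le)
  have hd1' : K * ∫ x, ψ x ∂ μn n < K * ε₁ := mul_lt_mul_of_pos_left h1 hKpos
  have hd3' : K * (μ E2).toReal < K * ε₁ := mul_lt_mul_of_pos_left hμE2 hKpos
  calc dist (∫ x in A, G x ∂ μn n) (∫ x in A, G x ∂μ)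
      ≤ dist (∫ x in A, G x ∂ μn n) (∫ x, Φ x ∂ μn n)
        + dist (∫ x, Φ x ∂ μn n) (∫ x, Φ x ∂μ)
        + dist (∫ x, Φ x ∂μ) (∫ x in A, G x ∂μ) := dist_triangle4 _ _ _ _
    _ < ε := by linarith

end Core

section Glue

variable {C : Set S} [BorelSpace S]

lemma auxMOofSeq (hC : IsClosed C) {μ : Measure S} {μn : ℕ → Measure S}
    (hc : ∃ r : ℕ → ℝ, StrictAnti r ∧ (∀ i, 0 < r i) ∧ Tendsto r atTop (𝓝 0) ∧
      ∀ i, WeakConvOn {x | r i ≤ infDist x C} μn μ) :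
    MOTendsto C μn μ := by
  obtain ⟨r, hra, hrpos, hr0, hrw⟩ := hc
  intro f hf
  have hfc : Continuous f := auxContinuousOfIsCO hC hf
  obtain ⟨_, hpos, ⟨B, hB⟩, r0, hr0pos, hvan⟩ := hf
  obtain ⟨i, hi⟩ : ∃ i, r i < r0 := (hr0.eventually_lt_const hr0pos).exists
  have hAi := hrw i f hfc.continuousOn
    ⟨B, fun x _ => by rw [abs_of_nonneg (hpos x)]; exact hB x⟩
  have heq : ∀ ν : Measure S, ∫ x in {x | r i ≤ infDist x C}, f x ∂ν = ∫ x, f x ∂ν := by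
    intro ν
    refine setIntegral_eq_integral_of_forall_compl_eq_zero fun x hx => ?_
    have hxlt : infDist x C < r i := lt_of_not_ge (by simpa [Set.mem_setOf_eq] using hx)
    exact hvan x (lt_trans hxlt hi)
  rw [show (fun n => ∫ x in {x | r i ≤ infDist x C}, f x ∂ μn n)
      = fun n => ∫ x, f x ∂ μn n from funext fun n => heq _, heq μ] at hAi
  exact hAi

end Glue

/-- Portmanteau (i) ⟺ (v) ⟺ (vi): `μ_n → μ` in `M_O` iff the restrictions to
`S \ C^r` converge weakly for all but countably many `r > 0`, iff they converge
weakly along some sequence `r_i ↓ 0`. -/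
theorem stmt3 [BorelSpace S] [CompleteSpace S] [TopologicalSpace.SeparableSpace S]
    (C : Set S) (hC : IsClosed C)
    (μ : Measure S) (μn : ℕ → Measure S)
    (hμ : MemMO C μ) (hμn : ∀ n, MemMO C (μn n)) :
    (MOTendsto C μn μ ↔
      ∃ T : Set ℝ, T.Countable ∧ ∀ r : ℝ, 0 < r → r ∉ T →
        WeakConvOn {x | r ≤ infDist x C} μn μ) ∧
    ((∃ T : Set ℝ, T.Countable ∧ ∀ r : ℝ, 0 < r → r ∉ T →
        WeakConvOn {x | r ≤ infDist x C} μn μ) ↔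
      ∃ r : ℕ → ℝ, StrictAnti r ∧ (∀ i, 0 < r i) ∧ Tendsto r atTop (𝓝 0) ∧
        ∀ i, WeakConvOn {x | r i ≤ infDist x C} μn μ) := by
  have hab : MOTendsto C μn μ → ∃ T : Set ℝ, T.Countable ∧ ∀ r : ℝ, 0 < r → r ∉ T →
      WeakConvOn {x | r ≤ infDist x C} μn μ := by
    intro ha
    refine ⟨{r : ℝ | 0 < r ∧ μ {x | infDist x C = r} ≠ 0}, auxCountableBad hμ.2, ?_⟩
    intro r hr hrT
    have hzero : μ {x | infDist x C = r} = 0 := by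
      by_contra hne
      exact hrT ⟨hr, hne⟩
    exact auxWeakConv hC hμ hμn ha hr hzero
  have hbc : (∃ T : Set ℝ, T.Countable ∧ ∀ r : ℝ, 0 < r → r ∉ T →
        WeakConvOn {x | r ≤ infDist x C} μn μ) →
      ∃ r : ℕ → ℝ, StrictAnti r ∧ (∀ i, 0 < r i) ∧ Tendsto r atTop (𝓝 0) ∧
        ∀ i, WeakConvOn {x | r i ≤ infDist x C} μn μ := by
    rintro ⟨T, hTc, hT⟩
    obtain ⟨r, h1, h2, h3, h4⟩ := auxSeq T hTc
    exact ⟨r, h1, h2, h3, fun i => hT (r i) (h2 i) (h4 i)⟩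
  have hca : (∃ r : ℕ → ℝ, StrictAnti r ∧ (∀ i, 0 < r i) ∧ Tendsto r atTop (𝓝 0) ∧
      ∀ i, WeakConvOn {x | r i ≤ infDist x C} μn μ) → MOTendsto C μn μ :=
    fun hc => auxMOofSeq hC hc
  exact ⟨⟨hab, fun hb => hca (hbc hb)⟩, hbc, fun hc => hab (hca hc)⟩
end
end

section
/- Let ν ∈ M_O and suppose there exist a nonzero μ ∈ M_O and a Borel set E ⊆ O bounded away from C with 0 < ν(tE) < ∞ for all sufficiently large t, such that ν(tE)^{-1} ν(t·) → μ in M_O as t → ∞. Then there exists α ≥ 0 such that μ(λA) = λ^{-α} μ(A) for every Borel set A ⊆ O and every λ > 0. -/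
open MeasureTheory Metric Filter Topology Set

noncomputable section

variable {S : Type*} [MetricSpace S] [MeasurableSpace S]

/-- Axioms (A1)–(A3) for a scalar multiplication `(0,∞) × S → S`, together with the
requirement that `C` be a cone. -/
def ScaleAxioms (C : Set S) (sm : ℝ → S → S) : Prop :=
  ContinuousOn (fun p : ℝ × S => sm p.1 p.2) (Set.Ioi (0:ℝ) ×ˢ Set.univ) ∧
  (∀ x, sm 1 x = x) ∧
  (∀ l₁ l₂ : ℝ, 0 < l₁ → 0 < l₂ → ∀ x, sm l₁ (sm l₂ x) = sm (l₁ * l₂) x) ∧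
  (∀ l : ℝ, 1 < l → ∀ x ∈ Cᶜ, infDist x C < infDist (sm l x) C) ∧
  (∀ x ∈ C, ∀ l : ℝ, 0 < l → sm l x ∈ C)

section Prelim

variable {C : Set S} {f : S → ℝ}
set_option linter.unusedSectionVars false

lemma IsCO.continuous (hC : IsClosed C) (hf : IsCO C f) : Continuous f := by
  obtain ⟨hcont, _, _, r, hr, hvan⟩ := hf
  rw [continuous_iff_continuousAt]
  intro x
  by_cases hx : x ∈ C
  · have hopen : IsOpen {y : S | infDist y C < r} :=
      isOpen_lt (continuous_infDist_pt C) continuous_const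
    have hmem : x ∈ {y : S | infDist y C < r} := by
      show infDist x C < r
      rw [infDist_zero_of_mem hx]; exact hr
    have hev : f =ᶠ[𝓝 x] fun _ => (0:ℝ) := by
      filter_upwards [hopen.mem_nhds hmem] with y hy
      exact hvan y hy
    exact ContinuousAt.congr continuousAt_const hev.symm
  · exact hcont.continuousAt (hC.isOpen_compl.mem_nhds hx)

lemma measurableSet_infDistGe [BorelSpace S] (C : Set S) (r : ℝ) :
    MeasurableSet {x : S | r ≤ infDist x C} :=
  (isClosed_le continuous_const (continuous_infDist_pt C)).measurableSet

lemma IsCO.integrable [BorelSpace S] {μ : Measure S} (hC : IsClosed C)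
    (hf : IsCO C f) (hμ : MemMO C μ) : Integrable f μ := by
  obtain ⟨B, hB⟩ := hf.2.2.1
  obtain ⟨r, hr, hvan⟩ := hf.2.2.2
  
  refine Integrable.mono' (g := fun x => Set.indicator {x : S | r ≤ infDist x C} (fun _ => B) x)
    ?_ ((hf.continuous hC).aestronglyMeasurable) ?_
  · exact (integrable_indicator_iff (measurableSet_infDistGe C r)).2
      (integrableOn_const (hμ.2 r hr).ne)
  · refine Filter.Eventually.of_forall fun x => ?_
    rw [Real.norm_eq_abs, abs_of_nonneg (hf.2.1 x)]
    show f x ≤ Set.indicator {x : S | r ≤ infDist x C} (fun _ => B) x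
    by_cases hx : x ∈ {x : S | r ≤ infDist x C}
    · rw [Set.indicator_of_mem hx]; exact hB x
    · rw [Set.indicator_of_notMem hx, hvan x (lt_of_not_ge hx)]

end Prelim

section Scale

variable {C : Set S} {sm : ℝ → S → S} {l : ℝ}
set_option linter.unusedSectionVars false

lemma sm_cont (hcont : ContinuousOn (fun p : ℝ × S => sm p.1 p.2) (Set.Ioi (0:ℝ) ×ˢ Set.univ))
    (hl : 0 < l) : Continuous (sm l) := by
  have h : Continuous fun x : S => ((l, x) : ℝ × S) := by fun_prop
  exact hcont.comp_continuous h (fun x => ⟨hl, trivial⟩)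

lemma sm_leftinv (hone : ∀ x : S, sm 1 x = x)
    (hmulc : ∀ l₁ l₂ : ℝ, 0 < l₁ → 0 < l₂ → ∀ x, sm l₁ (sm l₂ x) = sm (l₁ * l₂) x)
    (hl : 0 < l) (x : S) : sm l⁻¹ (sm l x) = x := by
  rw [hmulc _ _ (inv_pos.2 hl) hl, inv_mul_cancel₀ hl.ne', hone]

lemma sm_image_eq_preimage (hone : ∀ x : S, sm 1 x = x)
    (hmulc : ∀ l₁ l₂ : ℝ, 0 < l₁ → 0 < l₂ → ∀ x, sm l₁ (sm l₂ x) = sm (l₁ * l₂) x)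
    (hl : 0 < l) (A : Set S) : sm l '' A = sm l⁻¹ ⁻¹' A := by
  ext y
  constructor
  · rintro ⟨x, hx, rfl⟩
    show sm l⁻¹ (sm l x) ∈ A
    rwa [sm_leftinv hone hmulc hl]
  · intro hy
    refine ⟨sm l⁻¹ y, hy, ?_⟩
    have := sm_leftinv hone hmulc (inv_pos.2 hl) y
    rwa [inv_inv] at this

lemma sm_mem_C_iff (hone : ∀ x : S, sm 1 x = x)
    (hmulc : ∀ l₁ l₂ : ℝ, 0 < l₁ → 0 < l₂ → ∀ x, sm l₁ (sm l₂ x) = sm (l₁ * l₂) x)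
    (hcone : ∀ x ∈ C, ∀ l : ℝ, 0 < l → sm l x ∈ C)
    (hl : 0 < l) {x : S} : sm l x ∈ C ↔ x ∈ C := by
  constructor
  · intro h
    have := hcone _ h l⁻¹ (inv_pos.2 hl)
    rwa [sm_leftinv hone hmulc hl] at this
  · intro h; exact hcone _ h l hl

lemma infDist_sm_le (hone : ∀ x : S, sm 1 x = x)
    (hmulc : ∀ l₁ l₂ : ℝ, 0 < l₁ → 0 < l₂ → ∀ x, sm l₁ (sm l₂ x) = sm (l₁ * l₂) x)
    (hA3 : ∀ l : ℝ, 1 < l → ∀ x ∈ Cᶜ, infDist x C < infDist (sm l x) C)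
    (hcone : ∀ x ∈ C, ∀ l : ℝ, 0 < l → sm l x ∈ C)
    (hl0 : 0 < l) (hl1 : l ≤ 1) (x : S) : infDist (sm l x) C ≤ infDist x C := by
  by_cases hx : x ∈ C
  · rw [infDist_zero_of_mem hx, infDist_zero_of_mem (hcone _ hx l hl0)]
  · rcases eq_or_lt_of_le hl1 with h1 | h1
    · rw [h1, hone]
    · have hxc : sm l x ∈ Cᶜ := by
        rw [mem_compl_iff, sm_mem_C_iff hone hmulc hcone hl0]; exact hx
      have := hA3 l⁻¹ ((one_lt_inv₀ hl0).2 h1) _ hxc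
      rw [sm_leftinv hone hmulc hl0] at this
      exact this.le

end Scale

section Bump

variable {C : Set S}
set_option linter.unusedSectionVars false

/-- A continuous cutoff: `0` where `infDist x C ≤ a`, `1` where `b ≤ infDist x C`. -/
def bump (C : Set S) (a b : ℝ) (x : S) : ℝ :=
  min 1 (max 0 ((infDist x C - a) / (b - a)))

lemma bump_nonneg (a b : ℝ) (x : S) : 0 ≤ bump C a b x :=
  le_min zero_le_one (le_max_left _ _)

lemma bump_le_one (a b : ℝ) (x : S) : bump C a b x ≤ 1 := min_le_left _ _

lemma bump_continuous (a b : ℝ) : Continuous (bump C a b) := by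
  unfold bump
  exact continuous_const.min (continuous_const.max
    (((continuous_infDist_pt C).sub continuous_const).div_const _))

lemma bump_isCO {a b : ℝ} (ha : 0 < a) (hab : a < b) : IsCO C (bump C a b) := by
  refine ⟨(bump_continuous a b).continuousOn, bump_nonneg a b, ⟨1, bump_le_one a b⟩,
    a, ha, fun x hx => ?_⟩
  have : (infDist x C - a) / (b - a) ≤ 0 :=
    div_nonpos_of_nonpos_of_nonneg (by linarith) (by linarith)
  unfold bump
  rw [max_eq_left this, min_eq_right zero_le_one]

lemma bump_eq_one {a b : ℝ} (hab : a < b) {x : S} (hx : b ≤ infDist x C) :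
    bump C a b x = 1 := by
  have : (1:ℝ) ≤ (infDist x C - a) / (b - a) := by
    rw [le_div_iff₀ (by linarith)]; linarith
  unfold bump
  rw [max_eq_right (le_trans zero_le_one this), min_eq_left this]

lemma bump_eq_zero_of_lt {a b : ℝ} (hab : a < b) {x : S} (hx : infDist x C < a) :
    bump C a b x = 0 := by
  have : (infDist x C - a) / (b - a) ≤ 0 :=
    div_nonpos_of_nonpos_of_nonneg (by linarith) (by linarith)
  unfold bump
  rw [max_eq_left this, min_eq_right zero_le_one]

lemma bump_le_indicator {a b : ℝ} (hab : a < b) (x : S) :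
    bump C a b x ≤ Set.indicator {y : S | a ≤ infDist y C} (fun _ => (1:ℝ)) x := by
  by_cases hx : x ∈ {y : S | a ≤ infDist y C}
  · rw [Set.indicator_of_mem hx]; exact bump_le_one a b x
  · rw [Set.indicator_of_notMem hx, bump_eq_zero_of_lt hab (lt_of_not_ge hx)]

lemma indicator_le_bump {a b : ℝ} (hab : a < b) (x : S) :
    Set.indicator {y : S | b ≤ infDist y C} (fun _ => (1:ℝ)) x ≤ bump C a b x := by
  by_cases hx : x ∈ {y : S | b ≤ infDist y C}
  · rw [Set.indicator_of_mem hx, bump_eq_one hab hx]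
  · rw [Set.indicator_of_notMem hx]; exact bump_nonneg a b x

lemma integral_indicator_one [BorelSpace S] (μ : Measure S) (r : ℝ) :
    ∫ x, Set.indicator {y : S | r ≤ infDist y C} (fun _ => (1:ℝ)) x ∂μ
      = (μ {y : S | r ≤ infDist y C}).toReal := by
  rw [MeasureTheory.integral_indicator_const (1:ℝ) (measurableSet_infDistGe C r)]
  simp
  rfl

lemma le_integral_bump [BorelSpace S] {μ : Measure S} (hC : IsClosed C) (hμ : MemMO C μ)
    {a b : ℝ} (ha : 0 < a) (hab : a < b) :
    (μ {y : S | b ≤ infDist y C}).toReal ≤ ∫ x, bump C a b x ∂μ := by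
  rw [← integral_indicator_one μ b]
  refine integral_mono ?_ ((bump_isCO ha hab).integrable hC hμ) (indicator_le_bump hab)
  exact (integrable_indicator_iff (measurableSet_infDistGe C b)).2
    (integrableOn_const (hμ.2 b (ha.trans hab)).ne)

end Bump

section Unique

variable {C : Set S}
set_option linter.unusedSectionVars false

lemma MO_eq_on_closed [BorelSpace S] {μ₁ μ₂ : Measure S} (hC : IsClosed C)
    (h1 : MemMO C μ₁) (h2 : MemMO C μ₂)
    (hint : ∀ f : S → ℝ, IsCO C f → ∫ x, f x ∂μ₁ = ∫ x, f x ∂μ₂)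
    {r : ℝ} (hr : 0 < r) {F : Set S} (hF : IsClosed F)
    (hFb : ∀ x ∈ F, r ≤ infDist x C) : μ₁ F = μ₂ F := by
  rcases F.eq_empty_or_nonempty with rfl | hFne
  · simp
  -- the approximating functions
  set g : ℕ → S → ℝ := fun n x => bump C (r/2) r x * max 0 (1 - (n+1) * infDist x F) with hg
  have hgCO : ∀ n, IsCO C (g n) := by
    intro n
    have hco := bump_isCO (C := C) (by linarith) (by linarith : r/2 < r)
    refine ⟨?_, ?_, ⟨1, ?_⟩, r/2, by linarith, ?_⟩
    · exact (Continuous.continuousOn (by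
        exact (bump_continuous _ _).mul (continuous_const.max (continuous_const.sub
          (continuous_const.mul (continuous_infDist_pt F))))))
    · intro x
      exact mul_nonneg (bump_nonneg _ _ _) (le_max_left _ _)
    · intro x
      refine mul_le_one₀ (bump_le_one _ _ _) (le_max_left _ _) ?_
      refine max_le zero_le_one ?_
      have : 0 ≤ (n+1 : ℝ) * infDist x F :=
        mul_nonneg (by positivity) infDist_nonneg
      linarith
    · intro x hx
      rw [hg]
      simp only
      rw [bump_eq_zero_of_lt (by linarith) hx, zero_mul]
  have hbound : ∀ n x, ‖g n x‖ ≤ Set.indicator {y : S | r/2 ≤ infDist y C} (fun _ => (1:ℝ)) x := by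
    intro n x
    rw [Real.norm_eq_abs, abs_of_nonneg ((hgCO n).2.1 x)]
    calc g n x ≤ bump C (r/2) r x := by
          refine mul_le_of_le_one_right (bump_nonneg _ _ _) ?_
          refine max_le zero_le_one ?_
          have : 0 ≤ (n+1 : ℝ) * infDist x F := mul_nonneg (by positivity) infDist_nonneg
          linarith
      _ ≤ _ := bump_le_indicator (by linarith) x
  have hlim : ∀ x, Tendsto (fun n => g n x) atTop
      (𝓝 (Set.indicator F (fun _ => (1:ℝ)) x)) := by
    intro x
    by_cases hx : x ∈ F
    · have : ∀ n, g n x = 1 := by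
        intro n
        rw [hg]
        simp only
        rw [infDist_zero_of_mem hx, mul_zero, sub_zero, max_eq_right zero_le_one, mul_one,
          bump_eq_one (by linarith) (hFb x hx)]
      rw [Set.indicator_of_mem hx]
      simp only [this]
      exact tendsto_const_nhds
    · have hd : 0 < infDist x F := (hF.notMem_iff_infDist_pos hFne).1 hx
      rw [Set.indicator_of_notMem hx]
      obtain ⟨N, hN⟩ := exists_nat_gt (1 / infDist x F)
      have : ∀ n ≥ N, g n x = 0 := by
        intro n hn
        have h1 : (1:ℝ) ≤ (n+1) * infDist x F := by
          rw [div_lt_iff₀ hd] at hN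
          have : (N:ℝ) ≤ (n:ℝ) := Nat.cast_le.2 hn
          nlinarith [infDist_nonneg (x := x) (s := F)]
        rw [hg]
        simp only
        rw [max_eq_left (by linarith), mul_zero]
      refine tendsto_const_nhds.congr' ?_
      filter_upwards [eventually_ge_atTop N] with n hn
      exact (this n hn).symm
  have hintbound : ∀ (μ : Measure S), MemMO C μ →
      Integrable (Set.indicator {y : S | r/2 ≤ infDist y C} (fun _ => (1:ℝ))) μ := by
    intro μ hμ
    exact (integrable_indicator_iff (measurableSet_infDistGe C (r/2))).2
      (integrableOn_const (hμ.2 (r/2) (by linarith)).ne)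
  have hten : ∀ (μ : Measure S), MemMO C μ →
      Tendsto (fun n => ∫ x, g n x ∂μ) atTop (𝓝 ((μ F).toReal)) := by
    intro μ hμ
    have := tendsto_integral_of_dominated_convergence
      (F := g) (f := Set.indicator F (fun _ => (1:ℝ)))
      (bound := Set.indicator {y : S | r/2 ≤ infDist y C} (fun _ => (1:ℝ)))
      (fun n => ((hgCO n).continuous hC).aestronglyMeasurable)
      (hintbound μ hμ)
      (fun n => Filter.Eventually.of_forall (hbound n))
      (Filter.Eventually.of_forall hlim)
    rwa [MeasureTheory.integral_indicator_const (1:ℝ) hF.measurableSet, smul_eq_mul,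
      mul_one] at this
  have h1t := hten μ₁ h1
  have h2t : Tendsto (fun n => ∫ x, g n x ∂μ₁) atTop (𝓝 ((μ₂ F).toReal)) := by
    refine (hten μ₂ h2).congr fun n => (hint (g n) (hgCO n)).symm
  have heq : (μ₁ F).toReal = (μ₂ F).toReal := tendsto_nhds_unique h1t h2t
  have hfin1 : μ₁ F < ⊤ := lt_of_le_of_lt (measure_mono fun x hx => hFb x hx) (h1.2 r hr)
  have hfin2 : μ₂ F < ⊤ := lt_of_le_of_lt (measure_mono fun x hx => hFb x hx) (h2.2 r hr)
  exact (ENNReal.toReal_eq_toReal_iff' hfin1.ne hfin2.ne).1 heq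

lemma MO_ext [BorelSpace S] {μ₁ μ₂ : Measure S} (hC : IsClosed C) (hCne : C.Nonempty)
    (h1 : MemMO C μ₁) (h2 : MemMO C μ₂)
    (hint : ∀ f : S → ℝ, IsCO C f → ∫ x, f x ∂μ₁ = ∫ x, f x ∂μ₂) :
    ∀ A : Set S, MeasurableSet A → A ⊆ Cᶜ → μ₁ A = μ₂ A := by
  -- restricted measures agree
  have hres : ∀ r : ℝ, 0 < r →
      μ₁.restrict {y : S | r ≤ infDist y C} = μ₂.restrict {y : S | r ≤ infDist y C} := by
    intro r hr
    have hSr := measurableSet_infDistGe C r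
    have hfin : IsFiniteMeasure (μ₁.restrict {y : S | r ≤ infDist y C}) := by
      constructor
      rw [Measure.restrict_apply_univ]
      exact h1.2 r hr
    refine ext_of_generate_finite {s : Set S | IsClosed s}
      ?_ isPiSystem_isClosed ?_ ?_
    · rw [BorelSpace.measurable_eq (α := S), borel_eq_generateFrom_isClosed]
    · intro s hs
      rw [Measure.restrict_apply' hSr, Measure.restrict_apply' hSr]
      exact MO_eq_on_closed hC h1 h2 hint hr
        (hs.inter (isClosed_le continuous_const (continuous_infDist_pt C)))
        (fun x hx => hx.2)
    · rw [Measure.restrict_apply_univ, Measure.restrict_apply_univ]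
      exact MO_eq_on_closed hC h1 h2 hint hr
        (isClosed_le continuous_const (continuous_infDist_pt C)) (fun x hx => hx)
  intro A hA hAO
  have hun : A = ⋃ n : ℕ, A ∩ {y : S | 1/(n+1) ≤ infDist y C} := by
    ext x
    constructor
    · intro hx
      have hd : 0 < infDist x C := (hC.notMem_iff_infDist_pos hCne).1 (hAO hx)
      obtain ⟨N, hN⟩ := exists_nat_gt (1 / infDist x C)
      refine Set.mem_iUnion.2 ⟨N, hx, ?_⟩
      show 1/((N:ℝ)+1) ≤ infDist x C
      rw [div_lt_iff₀ hd] at hN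
      rw [div_le_iff₀ (by positivity)]
      nlinarith [infDist_nonneg (x := x) (s := C)]
    · rintro hx
      obtain ⟨n, hn, -⟩ := Set.mem_iUnion.1 hx
      exact hn
  have hmono : Monotone fun n : ℕ => A ∩ {y : S | 1/(n+1) ≤ infDist y C} := by
    intro m n hmn
    refine Set.inter_subset_inter_right A fun x hx => ?_
    have hx' : 1/((m:ℝ)+1) ≤ infDist x C := hx
    show 1/((n:ℝ)+1) ≤ infDist x C
    refine le_trans ?_ hx'
    have h1 : (0:ℝ) < m + 1 := by positivity
    have h2 : (m:ℝ) + 1 ≤ (n:ℝ) + 1 := by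
      have : (m:ℝ) ≤ n := Nat.cast_le.2 hmn
      linarith
    exact one_div_le_one_div_of_le h1 h2
  have ht1 : Tendsto (fun n : ℕ => μ₁ (A ∩ {y : S | 1/(n+1) ≤ infDist y C})) atTop
      (𝓝 (μ₁ A)) := by
    have := tendsto_measure_iUnion_atTop (μ := μ₁) hmono
    rwa [← hun] at this
  have ht2 : Tendsto (fun n : ℕ => μ₂ (A ∩ {y : S | 1/(n+1) ≤ infDist y C})) atTop
      (𝓝 (μ₂ A)) := by
    have := tendsto_measure_iUnion_atTop (μ := μ₂) hmono
    rwa [← hun] at this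
  have heq : ∀ n : ℕ, μ₁ (A ∩ {y : S | 1/(n+1) ≤ infDist y C})
      = μ₂ (A ∩ {y : S | 1/(n+1) ≤ infDist y C}) := by
    intro n
    have hr : (0:ℝ) < 1/(n+1) := by positivity
    have := hres (1/(n+1)) hr
    rw [← Measure.restrict_apply' (measurableSet_infDistGe C _),
      ← Measure.restrict_apply' (measurableSet_infDistGe C _), this]
  exact tendsto_nhds_unique (ht1.congr heq) ht2

end Unique

section Cauchy

set_option maxHeartbeats 1000000 in
lemma cauchy_pow {G : ℝ → ℝ} (hpos : ∀ l, 1 ≤ l → 0 < G l)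
    (hmul : ∀ s t, 1 ≤ s → 1 ≤ t → G (s*t) = G s * G t)
    (hant : ∀ s t, 1 ≤ s → s ≤ t → G t ≤ G s) :
    ∃ α : ℝ, 0 ≤ α ∧ ∀ l, 1 ≤ l → G l = l ^ (-α) := by
  set h : ℝ → ℝ := fun t => Real.log (G (Real.exp t)) with hh
  have hexp1 : ∀ t : ℝ, 0 ≤ t → 1 ≤ Real.exp t := fun t ht => Real.one_le_exp ht
  have hadd : ∀ s t : ℝ, 0 ≤ s → 0 ≤ t → h (s + t) = h s + h t := by
    intro s t hs ht
    rw [hh]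
    simp only
    rw [Real.exp_add, hmul _ _ (hexp1 s hs) (hexp1 t ht),
      Real.log_mul (hpos _ (hexp1 s hs)).ne' (hpos _ (hexp1 t ht)).ne']
  have hG1 : G 1 = 1 := by
    have := hmul 1 1 le_rfl le_rfl
    rw [mul_one] at this
    have h1 := hpos 1 le_rfl
    nlinarith
  have h0 : h 0 = 0 := by rw [hh]; simp [hG1]
  have hmono : ∀ s t : ℝ, 0 ≤ s → s ≤ t → h t ≤ h s := by
    intro s t hs hst
    exact Real.log_le_log (hpos _ (hexp1 t (hs.trans hst)))
      (hant _ _ (hexp1 s hs) (Real.exp_le_exp.2 hst))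
  have h1le : h 1 ≤ 0 := h0 ▸ hmono 0 1 le_rfl zero_le_one
  have hnat : ∀ (n : ℕ) (t : ℝ), 0 ≤ t → h (n * t) = n * h t := by
    intro n
    induction n with
    | zero => intro t ht; simp [h0]
    | succ n ih =>
      intro t ht
      have : ((n:ℝ)+1) * t = n*t + t := by ring
      rw [Nat.cast_succ, this, hadd _ _ (by positivity) ht, ih t ht]
      ring
  have hratio : ∀ (m k : ℕ), 0 < k → h ((m:ℝ)/(k:ℝ)) = ((m:ℝ)/(k:ℝ)) * h 1 := by
    intro m k hk
    have hkR : (0:ℝ) < k := Nat.cast_pos.2 hk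
    have h1 : h ((k:ℝ) * ((m:ℝ)/(k:ℝ))) = k * h ((m:ℝ)/(k:ℝ)) :=
      hnat k _ (by positivity)
    rw [mul_div_cancel₀ _ hkR.ne'] at h1
    have h2 : h (m:ℝ) = m * h 1 := by
      have := hnat m 1 zero_le_one
      rwa [mul_one] at this
    rw [h2] at h1
    field_simp
    linarith
  have hlin : ∀ t : ℝ, 0 ≤ t → h t = t * h 1 := by
    intro t ht
    -- lower-approx sequence ⌊k t⌋/k and upper (⌊k t⌋+1)/k
    have hfl : Tendsto (fun k : ℕ => ((⌊t*(k:ℝ)⌋₊ : ℝ))/(k:ℝ)) atTop (𝓝 t) :=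
      (tendsto_nat_floor_mul_div_atTop (R := ℝ) ht).comp (tendsto_natCast_atTop_atTop (R := ℝ))
    have hfl1 : Tendsto (fun k : ℕ => ((⌊t*(k:ℝ)⌋₊ : ℝ) + 1)/(k:ℝ)) atTop (𝓝 t) := by
      have : Tendsto (fun k : ℕ => ((⌊t*(k:ℝ)⌋₊ : ℝ))/(k:ℝ) + 1/(k:ℝ)) atTop (𝓝 (t + 0)) :=
        hfl.add (tendsto_one_div_atTop_nhds_zero_nat)
      rw [add_zero] at this
      refine this.congr' ?_
      filter_upwards [eventually_gt_atTop 0] with k hk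
      field_simp
    have hball : Tendsto (fun k : ℕ => ((⌊t*(k:ℝ)⌋₊ : ℝ))/(k:ℝ) * h 1) atTop (𝓝 (t * h 1)) :=
      hfl.mul_const _
    have hball1 : Tendsto (fun k : ℕ => ((⌊t*(k:ℝ)⌋₊ : ℝ)+1)/(k:ℝ) * h 1) atTop
        (𝓝 (t * h 1)) := hfl1.mul_const _
    have hub : h t ≤ t * h 1 := by
      refine ge_of_tendsto hball ?_
      filter_upwards [eventually_gt_atTop 0] with k hk
      have hq : ((⌊t*(k:ℝ)⌋₊ : ℝ))/(k:ℝ) ≤ t := by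
        rw [div_le_iff₀ (by exact_mod_cast hk)]
        exact Nat.floor_le (by positivity)
      calc h t ≤ h (((⌊t*(k:ℝ)⌋₊ : ℝ))/(k:ℝ)) := hmono _ _ (by positivity) hq
        _ = _ := hratio _ k hk
    have hlb : t * h 1 ≤ h t := by
      refine le_of_tendsto hball1 ?_
      filter_upwards [eventually_gt_atTop 0] with k hk
      have hq : t ≤ ((⌊t*(k:ℝ)⌋₊ : ℝ) + 1)/(k:ℝ) := by
        rw [le_div_iff₀ (by exact_mod_cast hk)]
        exact le_of_lt (Nat.lt_floor_add_one _)
      calc ((⌊t*(k:ℝ)⌋₊ : ℝ) + 1)/(k:ℝ) * h 1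
          = (((⌊t*(k:ℝ)⌋₊ + 1 : ℕ) : ℝ))/(k:ℝ) * h 1 := by push_cast; ring
        _ = h ((((⌊t*(k:ℝ)⌋₊ + 1 : ℕ)) : ℝ)/(k:ℝ)) := (hratio _ k hk).symm
        _ ≤ h t := by
            refine hmono t _ ht ?_
            push_cast
            exact hq
    linarith
  refine ⟨-(h 1), by linarith, fun l hl => ?_⟩
  have hl0 : (0:ℝ) < l := lt_of_lt_of_le zero_lt_one hl
  have hlog : 0 ≤ Real.log l := Real.log_nonneg hl
  have := hlin (Real.log l) hlog
  rw [hh] at this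
  simp only at this
  rw [Real.exp_log hl0] at this
  rw [neg_neg, Real.rpow_def_of_pos hl0, ← this, Real.exp_log (hpos l hl)]

end Cauchy

section MoreScale

variable {C : Set S} {sm : ℝ → S → S} {l : ℝ}
set_option linter.unusedSectionVars false

lemma sm_image_image (hone : ∀ x : S, sm 1 x = x)
    (hmulc : ∀ l₁ l₂ : ℝ, 0 < l₁ → 0 < l₂ → ∀ x, sm l₁ (sm l₂ x) = sm (l₁ * l₂) x)
    (hl : 0 < l) (A : Set S) : sm l '' (sm l⁻¹ '' A) = A := by
  ext y
  constructor
  · rintro ⟨x, ⟨z, hz, rfl⟩, rfl⟩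
    rwa [show sm l (sm l⁻¹ z) = z from by
      have := sm_leftinv hone hmulc (inv_pos.2 hl) z
      rwa [inv_inv] at this]
  · intro hy
    exact ⟨sm l⁻¹ y, ⟨y, hy, rfl⟩, by
      have := sm_leftinv hone hmulc (inv_pos.2 hl) y
      rwa [inv_inv] at this⟩

lemma IsCO.comp_sm {f : S → ℝ} (hC : IsClosed C)
    (hcont : ContinuousOn (fun p : ℝ × S => sm p.1 p.2) (Set.Ioi (0:ℝ) ×ˢ Set.univ))
    (hone : ∀ x : S, sm 1 x = x)
    (hmulc : ∀ l₁ l₂ : ℝ, 0 < l₁ → 0 < l₂ → ∀ x, sm l₁ (sm l₂ x) = sm (l₁ * l₂) x)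
    (hA3 : ∀ l : ℝ, 1 < l → ∀ x ∈ Cᶜ, infDist x C < infDist (sm l x) C)
    (hcone : ∀ x ∈ C, ∀ l : ℝ, 0 < l → sm l x ∈ C)
    (hf : IsCO C f) (hl : 1 ≤ l) : IsCO C (fun x => f (sm l⁻¹ x)) := by
  have hl0 : 0 < l := lt_of_lt_of_le zero_lt_one hl
  obtain ⟨B, hB⟩ := hf.2.2.1
  obtain ⟨r, hr, hvan⟩ := hf.2.2.2
  refine ⟨((hf.continuous hC).comp (sm_cont hcont (inv_pos.2 hl0))).continuousOn,
    fun x => hf.2.1 _, ⟨B, fun x => hB _⟩, r, hr, fun x hx => ?_⟩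
  refine hvan _ (lt_of_le_of_lt ?_ hx)
  exact infDist_sm_le hone hmulc hA3 hcone (inv_pos.2 hl0) (inv_le_one_of_one_le₀ hl) x

end MoreScale


/-- Homogeneity of the limit measure: if `ν(tE)⁻¹ ν(t·) → μ` in `M_O` as `t → ∞` for
some Borel `E ⊆ O` bounded away from `C` with `0 < ν(tE) < ∞` for large `t`, and
`μ ≠ 0`, then there is `α ≥ 0` with `μ(λA) = λ^{-α} μ(A)` for all Borel `A ⊆ O`, `λ > 0`.
Here `ν(t·)` is the measure `A ↦ ν(tA)`, realized as the pushforward of `ν` under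
multiplication by `t⁻¹`. -/
theorem stmt9 [BorelSpace S] [CompleteSpace S] [TopologicalSpace.SeparableSpace S]
    (C : Set S) (hC : IsClosed C) (sm : ℝ → S → S) (hsm : ScaleAxioms C sm)
    (ν μ : Measure S) (hν : MemMO C ν) (hμ : MemMO C μ) (hμ0 : μ ≠ 0)
    (E : Set S) (hEmeas : MeasurableSet E) (hEO : E ⊆ Cᶜ) (hEb : BddAway C E)
    (hfin : ∀ᶠ t : ℝ in atTop, 0 < ν (sm t '' E) ∧ ν (sm t '' E) < ⊤)
    (hconv : ∀ f : S → ℝ, IsCO C f →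
      Tendsto
        (fun t : ℝ => ∫ x, f x ∂ ((ν (sm t '' E))⁻¹ • Measure.map (sm t⁻¹) ν))
        atTop (𝓝 (∫ x, f x ∂ μ))) :
    ∃ α : ℝ, 0 ≤ α ∧ ∀ A : Set S, MeasurableSet A → A ⊆ Cᶜ → ∀ l : ℝ, 0 < l →
      μ (sm l '' A) = ENNReal.ofReal (l ^ (-α)) * μ A := by
  obtain ⟨hcont, hone, hmulc, hA3, hcone⟩ := hsm
  -- trivial case: S empty
  rcases isEmpty_or_nonempty S with hS | hS
  · exact absurd (Measure.ext fun s _ => by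
      rw [Set.eq_empty_of_isEmpty s]; simp) hμ0
  -- C is nonempty
  have hCne : C.Nonempty := by
    by_contra hcc
    have hCempty : C = ∅ := Set.not_nonempty_iff_eq_empty.1 hcc
    obtain ⟨x⟩ := hS
    have := hA3 2 one_lt_two x (by simp [hCempty])
    rw [hCempty] at this
    simp [infDist] at this
  -- a set with positive finite measure
  have hμCc : 0 < μ Cᶜ := by
    rcases eq_or_lt_of_le (zero_le : 0 ≤ μ Cᶜ) with h | h
    · exfalso
      apply hμ0
      have : μ Set.univ = 0 := by
        have : μ Set.univ ≤ μ C + μ Cᶜ := by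
          rw [← Set.union_compl_self C]
          exact measure_union_le _ _
        rw [hμ.1, ← h] at this
        simpa using this
      exact Measure.measure_univ_eq_zero.1 this
    · exact h
  have hCcUnion : Cᶜ = ⋃ n : ℕ, {y : S | 1/((n:ℝ)+1) ≤ infDist y C} := by
    ext x
    constructor
    · intro hx
      have hd : 0 < infDist x C := (hC.notMem_iff_infDist_pos hCne).1 hx
      obtain ⟨N, hN⟩ := exists_nat_gt (1 / infDist x C)
      refine Set.mem_iUnion.2 ⟨N, ?_⟩
      show 1/((N:ℝ)+1) ≤ infDist x C
      rw [div_lt_iff₀ hd] at hN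
      rw [div_le_iff₀ (by positivity)]
      nlinarith [infDist_nonneg (x := x) (s := C)]
    · intro hx
      obtain ⟨n, hn⟩ := Set.mem_iUnion.1 hx
      have hn' : 1/((n:ℝ)+1) ≤ infDist x C := hn
      have : 0 < infDist x C := lt_of_lt_of_le (by positivity) hn'
      exact (hC.notMem_iff_infDist_pos hCne).2 this
  obtain ⟨n₀, hn₀⟩ : ∃ n : ℕ, 0 < μ {y : S | 1/((n:ℝ)+1) ≤ infDist y C} := by
    by_contra hno
    push_neg at hno
    have : μ Cᶜ = 0 := by
      rw [hCcUnion]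
      refine le_antisymm (le_trans (measure_iUnion_le _) ?_) zero_le
      simp only [nonpos_iff_eq_zero]
      refine ENNReal.tsum_eq_zero.2 fun n => le_antisymm (hno n) zero_le
    rw [this] at hμCc
    exact lt_irrefl _ hμCc
  set r₀ : ℝ := 1/((n₀:ℝ)+1) with hr₀def
  have hr₀ : 0 < r₀ := by positivity
  set D : Set S := {y : S | r₀ ≤ infDist y C} with hDdef
  have hDfin : μ D < ⊤ := hμ.2 r₀ hr₀
  -- the reference test function and its positive integral
  set f₀ : S → ℝ := bump C (r₀/2) r₀ with hf₀def
  have hf₀CO : IsCO C f₀ := bump_isCO (by positivity) (by linarith)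
  set c₀ : ℝ := ∫ x, f₀ x ∂μ with hc₀def
  have hc₀pos : 0 < c₀ := by
    refine lt_of_lt_of_le ?_ (le_integral_bump hC hμ (by positivity) (by linarith))
    exact ENNReal.toReal_pos hn₀.ne' hDfin.ne
  -- basic scaling facts
  have hsmM : ∀ l : ℝ, 0 < l → Measurable (sm l) := fun l hl => (sm_cont hcont hl).measurable
  have hNpos : ∀ᶠ t : ℝ in atTop, 0 < (ν (sm t '' E)).toReal := by
    filter_upwards [hfin] with t ht
    exact ENNReal.toReal_pos ht.1.ne' ht.2.ne
  -- change of variables inside the mapped measure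
  have hmapint : ∀ (l t : ℝ), 1 ≤ l → 0 < t → ∀ f : S → ℝ, Continuous f →
      ∫ x, f (sm l⁻¹ x) ∂(Measure.map (sm t⁻¹) ν)
        = ∫ x, f x ∂(Measure.map (sm (t*l)⁻¹) ν) := by
    intro l t hl ht f hf
    have hl0 : 0 < l := lt_of_lt_of_le zero_lt_one hl
    have hmm : Measure.map (sm l⁻¹) (Measure.map (sm t⁻¹) ν)
        = Measure.map (sm (t*l)⁻¹) ν := by
      rw [Measure.map_map (hsmM _ (inv_pos.2 hl0)) (hsmM _ (inv_pos.2 ht))]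
      congr 1
      funext x
      show sm l⁻¹ (sm t⁻¹ x) = sm (t*l)⁻¹ x
      rw [hmulc _ _ (inv_pos.2 hl0) (inv_pos.2 ht) x]
      congr 1
      field_simp
    rw [← hmm,
      integral_map (hsmM _ (inv_pos.2 hl0)).aemeasurable hf.aestronglyMeasurable]
  -- the fundamental eventual identity
  have hstar : ∀ l : ℝ, 1 ≤ l → ∀ f : S → ℝ, Continuous f → ∀ᶠ t : ℝ in atTop,
      ∫ x, f (sm l⁻¹ x) ∂((ν (sm t '' E))⁻¹ • Measure.map (sm t⁻¹) ν)
        = ((ν (sm (t*l) '' E)).toReal / (ν (sm t '' E)).toReal)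
          * ∫ x, f x ∂((ν (sm (t*l) '' E))⁻¹ • Measure.map (sm (t*l)⁻¹) ν) := by
    intro l hl f hf
    have hl0 : 0 < l := lt_of_lt_of_le zero_lt_one hl
    have hcomp : Tendsto (fun t : ℝ => t*l) atTop atTop :=
      Tendsto.atTop_mul_const hl0 tendsto_id
    filter_upwards [eventually_gt_atTop 0, hNpos, hcomp.eventually hNpos] with t ht hNt hNtl
    rw [integral_smul_measure, integral_smul_measure, ENNReal.toReal_inv, ENNReal.toReal_inv,
      hmapint l t hl ht f hf, smul_eq_mul, smul_eq_mul]
    rw [← mul_assoc]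
    congr 1
    rw [div_mul_eq_mul_div, mul_inv_cancel₀ hNtl.ne', one_div]
  -- definition of the candidate scaling function
  set G : ℝ → ℝ := fun l => (∫ x, f₀ (sm l⁻¹ x) ∂μ) / c₀ with hGdef
  -- the ratio of normalizations converges to G l
  have hRtend : ∀ l : ℝ, 1 ≤ l →
      Tendsto (fun t : ℝ => (ν (sm (t*l) '' E)).toReal / (ν (sm t '' E)).toReal)
        atTop (𝓝 (G l)) := by
    intro l hl
    have hl0 : 0 < l := lt_of_lt_of_le zero_lt_one hl
    have hcomp : Tendsto (fun t : ℝ => t*l) atTop atTop :=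
      Tendsto.atTop_mul_const hl0 tendsto_id
    have h1 : Tendsto
        (fun t : ℝ => ∫ x, f₀ (sm l⁻¹ x) ∂((ν (sm t '' E))⁻¹ • Measure.map (sm t⁻¹) ν))
        atTop (𝓝 (∫ x, f₀ (sm l⁻¹ x) ∂μ)) :=
      hconv _ (hf₀CO.comp_sm hC hcont hone hmulc hA3 hcone hl)
    have h2 : Tendsto
        (fun t : ℝ => ∫ x, f₀ x ∂((ν (sm (t*l) '' E))⁻¹ • Measure.map (sm (t*l)⁻¹) ν))
        atTop (𝓝 c₀) := (hconv f₀ hf₀CO).comp hcomp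
    have h2ne : ∀ᶠ t : ℝ in atTop,
        ∫ x, f₀ x ∂((ν (sm (t*l) '' E))⁻¹ • Measure.map (sm (t*l)⁻¹) ν) ≠ 0 :=
      h2.eventually_ne hc₀pos.ne'
    have hdiv : Tendsto (fun t : ℝ =>
        (∫ x, f₀ (sm l⁻¹ x) ∂((ν (sm t '' E))⁻¹ • Measure.map (sm t⁻¹) ν)) /
          (∫ x, f₀ x ∂((ν (sm (t*l) '' E))⁻¹ • Measure.map (sm (t*l)⁻¹) ν)))
        atTop (𝓝 (G l)) := h1.div h2 hc₀pos.ne'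
    refine hdiv.congr' ?_
    filter_upwards [hstar l hl f₀ (hf₀CO.continuous hC), h2ne] with t hts htne
    rw [hts, mul_div_assoc, div_self htne, mul_one]
  -- key scaling identity for integrals of test functions
  have hGkey : ∀ l : ℝ, 1 ≤ l → ∀ f : S → ℝ, IsCO C f →
      ∫ x, f (sm l⁻¹ x) ∂μ = G l * ∫ x, f x ∂μ := by
    intro l hl f hf
    have hl0 : 0 < l := lt_of_lt_of_le zero_lt_one hl
    have hcomp : Tendsto (fun t : ℝ => t*l) atTop atTop :=
      Tendsto.atTop_mul_const hl0 tendsto_id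
    have h1 : Tendsto
        (fun t : ℝ => ∫ x, f (sm l⁻¹ x) ∂((ν (sm t '' E))⁻¹ • Measure.map (sm t⁻¹) ν))
        atTop (𝓝 (∫ x, f (sm l⁻¹ x) ∂μ)) :=
      hconv _ (hf.comp_sm hC hcont hone hmulc hA3 hcone hl)
    have h2 : Tendsto
        (fun t : ℝ => ((ν (sm (t*l) '' E)).toReal / (ν (sm t '' E)).toReal)
          * ∫ x, f x ∂((ν (sm (t*l) '' E))⁻¹ • Measure.map (sm (t*l)⁻¹) ν))
        atTop (𝓝 (G l * ∫ x, f x ∂μ)) :=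
      (hRtend l hl).mul ((hconv f hf).comp hcomp)
    exact tendsto_nhds_unique (h1.congr' (hstar l hl f (hf.continuous hC))) h2
  -- the measure-level scaling identity, for l ≥ 1
  have hGnonneg : ∀ l : ℝ, 1 ≤ l → 0 ≤ G l := by
    intro l hl
    exact div_nonneg (integral_nonneg fun x => hf₀CO.2.1 _) hc₀pos.le
  have hmeasEq : ∀ l : ℝ, 1 ≤ l → ∀ A : Set S, MeasurableSet A → A ⊆ Cᶜ →
      μ (sm l '' A) = ENNReal.ofReal (G l) * μ A := by
    intro l hl A hA hAO
    have hl0 : 0 < l := lt_of_lt_of_le zero_lt_one hl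
    have hinv0 : (0:ℝ) < l⁻¹ := inv_pos.2 hl0
    have hm1 : MemMO C (Measure.map (sm l⁻¹) μ) := by
      constructor
      · rw [Measure.map_apply (hsmM _ hinv0) hC.measurableSet]
        have hCeq : sm l⁻¹ ⁻¹' C = C := by
          ext x
          exact sm_mem_C_iff hone hmulc hcone hinv0
        rw [hCeq, hμ.1]
      · intro r hr
        rw [Measure.map_apply (hsmM _ hinv0) (measurableSet_infDistGe C r)]
        refine lt_of_le_of_lt (measure_mono ?_) (hμ.2 r hr)
        intro x hx
        exact le_trans hx
          (infDist_sm_le hone hmulc hA3 hcone hinv0 (inv_le_one_of_one_le₀ hl) x)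
    have hm2 : MemMO C (ENNReal.ofReal (G l) • μ) := by
      constructor
      · rw [Measure.smul_apply, hμ.1, smul_zero]
      · intro r hr
        rw [Measure.smul_apply, smul_eq_mul]
        exact ENNReal.mul_lt_top ENNReal.ofReal_lt_top (hμ.2 r hr)
    have hint : ∀ f : S → ℝ, IsCO C f →
        ∫ x, f x ∂(Measure.map (sm l⁻¹) μ) = ∫ x, f x ∂(ENNReal.ofReal (G l) • μ) := by
      intro f hf
      rw [integral_map (hsmM _ hinv0).aemeasurable (hf.continuous hC).aestronglyMeasurable,
        integral_smul_measure, ENNReal.toReal_ofReal (hGnonneg l hl), smul_eq_mul,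
        hGkey l hl f hf]
    have := MO_ext hC hCne hm1 hm2 hint A hA hAO
    rw [Measure.map_apply (hsmM _ hinv0) hA, Measure.smul_apply, smul_eq_mul] at this
    rw [sm_image_eq_preimage hone hmulc hl0 A]
    exact this
  -- positivity of G
  have hGpos : ∀ l : ℝ, 1 ≤ l → 0 < G l := by
    intro l hl
    have hl0 : 0 < l := lt_of_lt_of_le zero_lt_one hl
    rcases eq_or_lt_of_le (hGnonneg l hl) with h0 | h; swap
    · exact h
    exfalso
    set A : Set S := sm l ⁻¹' Cᶜ with hAdef
    have hAmeas : MeasurableSet A := (hsmM l hl0) hC.measurableSet.compl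
    have hAO : A ⊆ Cᶜ := by
      intro x hx
      rw [Set.mem_preimage, mem_compl_iff, sm_mem_C_iff hone hmulc hcone hl0] at hx
      exact hx
    have himg : sm l '' A = Cᶜ := by
      rw [sm_image_eq_preimage hone hmulc hl0]
      ext x
      show sm l⁻¹ x ∈ sm l ⁻¹' Cᶜ ↔ x ∈ Cᶜ
      rw [Set.mem_preimage]
      have hx : sm l (sm l⁻¹ x) = x := by
        have := sm_leftinv hone hmulc (inv_pos.2 hl0) x
        rwa [inv_inv] at this
      rw [hx]
    have := hmeasEq l hl A hAmeas hAO
    rw [himg, ← h0] at this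
    simp only [ENNReal.ofReal_zero, zero_mul] at this
    rw [this] at hμCc
    exact lt_irrefl _ hμCc
  -- multiplicativity of G
  have hGmul : ∀ s t : ℝ, 1 ≤ s → 1 ≤ t → G (s*t) = G s * G t := by
    intro s t hs ht
    have hs0 : 0 < s := lt_of_lt_of_le zero_lt_one hs
    have hst : 1 ≤ s*t := by nlinarith
    have hcs : Tendsto (fun u : ℝ => u*s) atTop atTop :=
      Tendsto.atTop_mul_const hs0 tendsto_id
    have h2 : Tendsto (fun u : ℝ =>
        (ν (sm ((u*s)*t) '' E)).toReal / (ν (sm (u*s) '' E)).toReal)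
        atTop (𝓝 (G t)) := (hRtend t ht).comp hcs
    have h3 := hRtend s hs
    have h23 : Tendsto (fun u : ℝ =>
        ((ν (sm ((u*s)*t) '' E)).toReal / (ν (sm (u*s) '' E)).toReal)
          * ((ν (sm (u*s) '' E)).toReal / (ν (sm u '' E)).toReal))
        atTop (𝓝 (G t * G s)) := h2.mul h3
    have h1 := hRtend (s*t) hst
    have hev : ∀ᶠ u : ℝ in atTop,
        (ν (sm (u*(s*t)) '' E)).toReal / (ν (sm u '' E)).toReal
          = ((ν (sm ((u*s)*t) '' E)).toReal / (ν (sm (u*s) '' E)).toReal)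
            * ((ν (sm (u*s) '' E)).toReal / (ν (sm u '' E)).toReal) := by
      filter_upwards [hcs.eventually hNpos] with u hNus
      rw [div_mul_div_cancel₀ hNus.ne', mul_assoc]
    have := tendsto_nhds_unique (h1.congr' hev) h23
    rw [this, mul_comm]
  -- antitonicity of G
  have hGant : ∀ s t : ℝ, 1 ≤ s → s ≤ t → G t ≤ G s := by
    intro s t hs hst
    have hs0 : 0 < s := lt_of_lt_of_le zero_lt_one hs
    have ht0 : 0 < t := lt_of_lt_of_le hs0 hst
    have hDmeas : MeasurableSet D := measurableSet_infDistGe C r₀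
    have hDO : D ⊆ Cᶜ := by
      intro x hx
      have hx' : r₀ ≤ infDist x C := hx
      intro hxC
      rw [infDist_zero_of_mem hxC] at hx'
      linarith
    have h1 := hmeasEq s hs D hDmeas hDO
    have h2 := hmeasEq t (hs.trans hst) D hDmeas hDO
    have hsub : sm t '' D ⊆ sm s '' D := by
      rw [sm_image_eq_preimage hone hmulc hs0, sm_image_eq_preimage hone hmulc ht0]
      intro x hx
      have hx' : r₀ ≤ infDist (sm t⁻¹ x) C := hx
      show r₀ ≤ infDist (sm s⁻¹ x) C
      have hkey : sm t⁻¹ x = sm (t⁻¹*s) (sm s⁻¹ x) := by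
        rw [hmulc _ _ (by positivity) (inv_pos.2 hs0) x]
        congr 1
        field_simp
      refine le_trans hx' ?_
      rw [hkey]
      refine infDist_sm_le hone hmulc hA3 hcone (by positivity) ?_ _
      rw [inv_mul_le_one₀ ht0]
      exact hst
    have hle : ENNReal.ofReal (G t) * μ D ≤ ENNReal.ofReal (G s) * μ D := by
      rw [← h1, ← h2]
      exact measure_mono hsub
    have := (ENNReal.mul_le_mul_iff_left hn₀.ne' hDfin.ne).1 hle
    exact (ENNReal.ofReal_le_ofReal_iff (hGnonneg s hs)).1 this
  -- the exponent
  obtain ⟨α, hα, hGpow⟩ := cauchy_pow hGpos hGmul hGant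
  refine ⟨α, hα, ?_⟩
  intro A hA hAO l hl0
  rcases le_or_gt 1 l with hl1 | hl1
  · rw [hmeasEq l hl1 A hA hAO, hGpow l hl1]
  · have hinv1 : 1 ≤ l⁻¹ := (one_le_inv₀ hl0).2 hl1.le
    have hinv0 : (0:ℝ) < l⁻¹ := inv_pos.2 hl0
    have hBeq : sm l '' A = sm l⁻¹ ⁻¹' A := sm_image_eq_preimage hone hmulc hl0 A
    have hBmeas : MeasurableSet (sm l '' A) := by
      rw [hBeq]; exact (hsmM _ hinv0) hA
    have hBO : sm l '' A ⊆ Cᶜ := by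
      rintro y ⟨x, hx, rfl⟩
      rw [mem_compl_iff, sm_mem_C_iff hone hmulc hcone hl0]
      exact hAO hx
    have h1 := hmeasEq l⁻¹ hinv1 (sm l '' A) hBmeas hBO
    have h2 : sm l⁻¹ '' (sm l '' A) = A := by
      have := sm_image_image hone hmulc hinv0 A
      rwa [inv_inv] at this
    rw [h2, hGpow _ hinv1] at h1
    have hrpow : (l⁻¹ : ℝ) ^ (-α) = l ^ α := by
      rw [Real.inv_rpow hl0.le, Real.rpow_neg hl0.le, inv_inv]
    rw [hrpow] at h1
    -- h1 : μ A = ofReal (l ^ α) * μ (sm l '' A)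
    have : ENNReal.ofReal (l ^ (-α)) * μ A = μ (sm l '' A) := by
      rw [h1, ← mul_assoc, ← ENNReal.ofReal_mul (Real.rpow_nonneg hl0.le _),
        ← Real.rpow_add hl0, neg_add_cancel, Real.rpow_zero, ENNReal.ofReal_one, one_mul]
    exact this.symm
end
end
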